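/- arXiv:2306.09102 — 2 statements merged into one kernel-verified Lean document; each statement's English description precedes it below -/
import Mathlib

section
/- (Lemma 1) For every integer N ≥ 4, one has G(N) = N²/2 + 2R₁(N) + Σ_{n ≤ N} Λ₀(n) R(N − n) + O(N), i.e. there is an absolute constant K such that |G(N) − N²/2 − 2R₁(N) − Σ_{n ≤ N} Λ₀(n)R(N − n)| ≤ K·N for all N ≥ 4. -/
noncomputable def Lam (n : ℕ) : ℝ := ArithmeticFunction.vonMangoldt n

/-- ψ₂(n) = Σ_{m+m'=n, m,m'≥1} Λ(m)Λ(m')  (terms with m = 0 vanish since Λ(0)=0). -/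
noncomputable def psi2 (n : ℕ) : ℝ := ∑ m ∈ Finset.range n, Lam m * Lam (n - m)

/-- G(N) = Σ_{n ≤ N} ψ₂(n). -/
noncomputable def G (N : ℕ) : ℝ := ∑ n ∈ Finset.Icc 1 N, psi2 n

/-- ψ(x) = Σ_{n ≤ x} Λ(n). -/
noncomputable def psi (x : ℝ) : ℝ := ∑ n ∈ Finset.Icc 1 ⌊x⌋₊, Lam n

/-- R(x) = ψ(x) − x. -/
noncomputable def RR (x : ℝ) : ℝ := psi x - x

/-- ψ₁(x) = Σ_{n ≤ x} (x − n)Λ(n). -/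
noncomputable def psi1 (x : ℝ) : ℝ := ∑ n ∈ Finset.Icc 1 ⌊x⌋₊, (x - (n : ℝ)) * Lam n

/-- R₁(x) = ψ₁(x) − x²/2. -/
noncomputable def R1 (x : ℝ) : ℝ := psi1 x - x ^ 2 / 2

/-- Λ₀(n) = Λ(n) − 1 for n ≥ 1, and 0 otherwise. -/
noncomputable def Lam0 (n : ℕ) : ℝ := if 1 ≤ n then Lam n - 1 else 0

/-- ψ₂⁰(n) = Σ_{m+m'=n, m,m'≥1} Λ₀(m)Λ₀(m')  (the m = 0 term vanishes since Λ₀(0)=0). -/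
noncomputable def psi20 (n : ℕ) : ℝ := ∑ m ∈ Finset.range n, Lam0 m * Lam0 (n - m)

/-- Ψ(z) = Σ_{n ≥ 1} Λ(n) zⁿ. -/
noncomputable def PsiC (z : ℂ) : ℂ := ∑' n : ℕ, (Lam n : ℂ) * z ^ n

/-- K_N(z) = Σ_{n=1}^{N} z^{−n}. -/
noncomputable def KN (N : ℕ) (z : ℂ) : ℂ := ∑ n ∈ Finset.Icc 1 N, z ^ (-(n : ℤ))

/-- ω(x) = inf_{u ≥ 1} (η(u)·log x + log u). -/
noncomputable def omegaFn (η : ℝ → ℝ) (x : ℝ) : ℝ :=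
  sInf ((fun u => η u * Real.log x + Real.log u) '' Set.Ici 1)

/-- ϖ(x) = inf_{u ≥ 0} (η(u)·log x + u). -/
noncomputable def varpi (η : ℝ → ℝ) (x : ℝ) : ℝ :=
  sInf ((fun u => η u * Real.log x + u) '' Set.Ici 0)

/-- F(N) = Σ_{n ≥ 1} ψ₂(n) e^{−n/N}  (the n = 0 term vanishes since ψ₂(0)=0). -/
noncomputable def Fav (N : ℕ) : ℝ := ∑' n : ℕ, psi2 n * Real.exp (-(n : ℝ) / N)

lemma Lam_zero : Lam 0 = 0 := by simp [Lam]

lemma swap_core (f : ℕ → ℕ → ℝ) (N : ℕ) :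
    ∑ x ∈ (Finset.Icc 1 N).sigma (fun n => Finset.Icc 1 (n - 1)), f x.2 (x.1 - x.2)
      = ∑ y ∈ (Finset.Icc 1 N).sigma (fun m => Finset.Icc 1 (N - m)), f y.1 y.2 := by
  apply Finset.sum_nbij' (fun x => (⟨x.2, x.1 - x.2⟩ : (_ : ℕ) × ℕ))
    (fun y => (⟨y.1 + y.2, y.1⟩ : (_ : ℕ) × ℕ))
  · rintro ⟨n, m⟩ h
    simp only [Finset.mem_sigma, Finset.mem_Icc] at h ⊢
    omega
  · rintro ⟨m, k⟩ h
    simp only [Finset.mem_sigma, Finset.mem_Icc] at h ⊢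
    omega
  · rintro ⟨n, m⟩ h
    simp only [Finset.mem_sigma, Finset.mem_Icc] at h
    have : m + (n - m) = n := by omega
    simp [this]
  · rintro ⟨m, k⟩ h
    simp only [Finset.mem_sigma, Finset.mem_Icc] at h
    have : m + k - m = k := by omega
    simp [this]
  · rintro ⟨n, m⟩ h
    rfl

lemma swap_sym (g : ℕ → ℕ → ℝ) (N : ℕ) :
    ∑ x ∈ (Finset.Icc 1 N).sigma (fun m => Finset.Icc 1 (N - m)), g x.1 x.2
      = ∑ y ∈ (Finset.Icc 1 N).sigma (fun k => Finset.Icc 1 (N - k)), g y.2 y.1 := by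
  apply Finset.sum_nbij' (fun x => (⟨x.2, x.1⟩ : (_ : ℕ) × ℕ))
    (fun y => (⟨y.2, y.1⟩ : (_ : ℕ) × ℕ))
  · rintro ⟨m, k⟩ h
    simp only [Finset.mem_sigma, Finset.mem_Icc] at h ⊢
    omega
  · rintro ⟨k, m⟩ h
    simp only [Finset.mem_sigma, Finset.mem_Icc] at h ⊢
    omega
  · rintro ⟨m, k⟩ _; rfl
  · rintro ⟨k, m⟩ _; rfl
  · rintro ⟨m, k⟩ _; rfl

lemma range_eq (n : ℕ) (hn : 1 ≤ n) :
    Finset.range n = insert 0 (Finset.Icc 1 (n - 1)) := by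
  ext x; simp only [Finset.mem_range, Finset.mem_insert, Finset.mem_Icc]; omega

lemma key1 (N : ℕ) :
    G N = ∑ m ∈ Finset.Icc 1 N, Lam m * ∑ k ∈ Finset.Icc 1 (N - m), Lam k := by
  have h := swap_core (fun a b => Lam a * Lam b) N
  rw [Finset.sum_sigma, Finset.sum_sigma] at h
  unfold G psi2
  calc ∑ n ∈ Finset.Icc 1 N, ∑ m ∈ Finset.range n, Lam m * Lam (n - m)
      = ∑ n ∈ Finset.Icc 1 N, ∑ m ∈ Finset.Icc 1 (n - 1), Lam m * Lam (n - m) := by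
        apply Finset.sum_congr rfl
        intro n hn
        rw [Finset.mem_Icc] at hn
        rw [range_eq n hn.1, Finset.sum_insert (by simp), Lam_zero, zero_mul, zero_add]
    _ = ∑ m ∈ Finset.Icc 1 N, ∑ k ∈ Finset.Icc 1 (N - m), Lam m * Lam k := h
    _ = ∑ m ∈ Finset.Icc 1 N, Lam m * ∑ k ∈ Finset.Icc 1 (N - m), Lam k := by
        simp [Finset.mul_sum]

lemma key2 (N : ℕ) :
    ∑ m ∈ Finset.Icc 1 N, (∑ k ∈ Finset.Icc 1 (N - m), Lam k)
      = ∑ k ∈ Finset.Icc 1 N, ((N - k : ℕ) : ℝ) * Lam k := by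
  have h := swap_sym (fun _ k => Lam k) N
  rw [Finset.sum_sigma, Finset.sum_sigma] at h
  rw [h]
  apply Finset.sum_congr rfl
  intro k _
  simp [Finset.sum_const, Nat.card_Icc, nsmul_eq_mul]

lemma psi_floor {m N : ℕ} (hm : m ≤ N) :
    psi ((N : ℝ) - m) = ∑ k ∈ Finset.Icc 1 (N - m), Lam k := by
  have : ((N : ℝ) - m) = ((N - m : ℕ) : ℝ) := by
    rw [Nat.cast_sub hm]
  rw [psi, this, Nat.floor_natCast]

lemma psi1_nat (N : ℕ) :
    psi1 (N : ℝ) = ∑ n ∈ Finset.Icc 1 N, ((N : ℝ) - n) * Lam n := by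
  rw [psi1, Nat.floor_natCast]

/-- Lemma 1: G(N) = N²/2 + 2R₁(N) + Σ_{n ≤ N} Λ₀(n)R(N−n) + O(N) for N ≥ 4. -/
theorem stmt_0 : ∃ K : ℝ, ∀ N : ℕ, 4 ≤ N →
    |G N - (N : ℝ) ^ 2 / 2 - 2 * R1 N -
        ∑ n ∈ Finset.Icc 1 N, Lam0 n * RR ((N : ℝ) - (n : ℝ))| ≤ K * N := by
  refine ⟨1, fun N _ => ?_⟩
  -- Gauss sum
  have hg : (∑ m ∈ Finset.Icc 1 N, (m : ℝ)) = N * (N + 1) / 2 := by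
    have h2 := Finset.sum_range_id_mul_two (N + 1)
    have h3 := congrArg (fun k : ℕ => (k : ℝ)) h2
    push_cast at h3
    have h4 : Finset.range (N + 1) = insert 0 (Finset.Icc 1 N) := by
      have := range_eq (N + 1) (by omega)
      simpa using this
    rw [h4, Finset.sum_insert (by simp)] at h3
    push_cast at h3
    linarith
  -- G as a sum over psi
  have hG : G N = ∑ m ∈ Finset.Icc 1 N, Lam m * psi ((N : ℝ) - m) := by
    rw [key1]
    apply Finset.sum_congr rfl
    intro m hm
    rw [Finset.mem_Icc] at hm
    rw [psi_floor hm.2]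
  -- split off RR
  have hsplit : G N = (∑ m ∈ Finset.Icc 1 N, Lam0 m * RR ((N : ℝ) - m))
      + (∑ m ∈ Finset.Icc 1 N, RR ((N : ℝ) - m)) + psi1 (N : ℝ) := by
    rw [hG, psi1_nat, ← Finset.sum_add_distrib, ← Finset.sum_add_distrib]
    apply Finset.sum_congr rfl
    intro m hm
    rw [Finset.mem_Icc] at hm
    have hL : Lam0 m = Lam m - 1 := by rw [Lam0, if_pos hm.1]
    have hR : RR ((N : ℝ) - m) = psi ((N : ℝ) - m) - ((N : ℝ) - m) := rfl
    rw [hL, hR]; ring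
  -- the middle sum
  have hB : (∑ m ∈ Finset.Icc 1 N, RR ((N : ℝ) - m))
      = psi1 (N : ℝ) - ((N : ℝ) * N - N * (N + 1) / 2) := by
    have e1 : (∑ m ∈ Finset.Icc 1 N, RR ((N : ℝ) - m))
        = (∑ m ∈ Finset.Icc 1 N, psi ((N : ℝ) - m))
          - ∑ m ∈ Finset.Icc 1 N, ((N : ℝ) - m) := by
      rw [← Finset.sum_sub_distrib]
      rfl
    have e2 : (∑ m ∈ Finset.Icc 1 N, psi ((N : ℝ) - m)) = psi1 (N : ℝ) := by
      rw [psi1_nat]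
      calc (∑ m ∈ Finset.Icc 1 N, psi ((N : ℝ) - m))
          = ∑ m ∈ Finset.Icc 1 N, ∑ k ∈ Finset.Icc 1 (N - m), Lam k := by
            apply Finset.sum_congr rfl
            intro m hm
            rw [Finset.mem_Icc] at hm
            exact psi_floor hm.2
        _ = ∑ k ∈ Finset.Icc 1 N, ((N - k : ℕ) : ℝ) * Lam k := key2 N
        _ = ∑ n ∈ Finset.Icc 1 N, ((N : ℝ) - n) * Lam n := by
            apply Finset.sum_congr rfl
            intro k hk
            rw [Finset.mem_Icc] at hk
            rw [Nat.cast_sub hk.2]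
    have e3 : (∑ m ∈ Finset.Icc 1 N, ((N : ℝ) - m))
        = (N : ℝ) * N - N * (N + 1) / 2 := by
      rw [Finset.sum_sub_distrib, Finset.sum_const, Nat.card_Icc, hg]
      simp
    rw [e1, e2, e3]
  have hR1 : R1 (N : ℝ) = psi1 (N : ℝ) - (N : ℝ) ^ 2 / 2 := rfl
  have : G N - (N : ℝ) ^ 2 / 2 - 2 * R1 N -
      (∑ n ∈ Finset.Icc 1 N, Lam0 n * RR ((N : ℝ) - (n : ℝ))) = (N : ℝ) / 2 := by
    rw [hsplit, hB, hR1]; ring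
  rw [this]
  have hN : (0 : ℝ) ≤ N := Nat.cast_nonneg N
  rw [abs_of_nonneg (by linarith)]
  linarith
end

section
/- (Proposition 1, first bound) There is an absolute constant K such that for all integers N ≥ 4, |G(N) − N²/2| ≤ K · N · max_{0 ≤ u ≤ N} |R(u)|. -/
/-! ### Auxiliary lemmas -/

lemma Lam_nonneg (n : ℕ) : 0 ≤ Lam n := ArithmeticFunction.vonMangoldt_nonneg
lemma Lam_one : Lam 1 = 0 := by simp [Lam]
lemma Lam_le_log (n : ℕ) : Lam n ≤ Real.log n := ArithmeticFunction.vonMangoldt_le_log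

/-- ψ at natural arguments. -/
noncomputable def psiN (k : ℕ) : ℝ := ∑ j ∈ Finset.Icc 1 k, Lam j

lemma psiN_nonneg (k : ℕ) : 0 ≤ psiN k :=
  Finset.sum_nonneg fun _ _ => Lam_nonneg _

lemma psi_natCast (k : ℕ) : psi (k : ℝ) = psiN k := by
  rw [psi, psiN, Nat.floor_natCast]

lemma sum_range_succ_Lam (n : ℕ) : ∑ m ∈ Finset.range (n+1), Lam m = psiN n := by
  rw [Finset.sum_range_succ', Lam_zero, add_zero, psiN, ← Finset.Ico_add_one_right_eq_Icc,
    Finset.sum_Ico_eq_sum_range]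
  simp [add_comm]

lemma theta_le (n : ℕ) :
    ∑ k ∈ (Finset.Icc 1 n).filter (fun k => k.Prime), Lam k ≤ n * Real.log 4 := by
  have hfe : (Finset.Icc 1 n).filter (fun k => k.Prime)
      = (Finset.range (n+1)).filter (fun k => k.Prime) := by
    ext k
    simp only [Finset.mem_filter, Finset.mem_Icc, Finset.mem_range]
    constructor
    · rintro ⟨⟨h1, h2⟩, hp⟩; exact ⟨Nat.lt_succ_of_le h2, hp⟩
    · rintro ⟨h2, hp⟩; exact ⟨⟨hp.one_lt.le, Nat.lt_succ_iff.mp h2⟩, hp⟩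
  have hsum : ∑ k ∈ (Finset.range (n+1)).filter (fun k => k.Prime), Lam k
      = Real.log (primorial n) := by
    rw [primorial, Nat.cast_prod, Real.log_prod]
    · apply Finset.sum_congr rfl
      intro p hp
      simp only [Finset.mem_filter] at hp
      rw [Lam, ArithmeticFunction.vonMangoldt_apply_prime hp.2]
    · intro p hp
      simp only [Finset.mem_filter] at hp
      exact_mod_cast hp.2.pos.ne'
  rw [hfe, hsum]
  calc Real.log (primorial n) ≤ Real.log (4 ^ n) := by
        apply Real.log_le_log (by exact_mod_cast primorial_pos n)
        exact_mod_cast primorial_le_4_pow n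
    _ = n * Real.log 4 := by rw [Real.log_pow]

lemma exists_pe {k : ℕ} (hk : Lam k ≠ 0) (hnp : ¬ k.Prime) :
    ∃ p e : ℕ, p.Prime ∧ 2 ≤ e ∧ k = p ^ e ∧ k.minFac = p ∧ k.factorization p = e := by
  have hpp : IsPrimePow k := ArithmeticFunction.vonMangoldt_ne_zero_iff.mp hk
  obtain ⟨p, e, hp, he, hk'⟩ := hpp
  have hp' : p.Prime := hp.nat_prime
  have he2 : 2 ≤ e := by
    by_contra h
    have : e = 1 := by omega
    subst this
    simp only [pow_one] at hk'
    exact hnp (hk' ▸ hp')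
  have hmf : k.minFac = p := by rw [← hk', hp'.pow_minFac (by omega)]
  have hfac : k.factorization p = e := by
    rw [← hk', hp'.factorization_pow]; simp
  exact ⟨p, e, hp', he2, hk'.symm, hmf, hfac⟩

lemma card_S_le (n : ℕ) :
    ((Finset.Icc 1 n).filter (fun k => ¬ k.Prime ∧ Lam k ≠ 0)).card ≤ 2 * Nat.sqrt n := by
  classical
  have := Finset.card_le_card_of_injOn
    (f := fun k => 2 * k.minFac ^ (k.factorization k.minFac / 2) + k.factorization k.minFac % 2)
    (s := (Finset.Icc 1 n).filter (fun k => ¬ k.Prime ∧ Lam k ≠ 0))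
    (t := Finset.Icc 2 (2 * Nat.sqrt n + 1)) ?_ ?_
  · simpa [Nat.card_Icc] using this
  · intro k hk
    simp only [Finset.mem_coe, Finset.mem_filter, Finset.mem_Icc] at hk ⊢
    obtain ⟨⟨hk1, hkn⟩, hnp, hΛ⟩ := hk
    obtain ⟨p, e, hp, he2, hke, hmf, hfac⟩ := exists_pe hΛ hnp
    rw [hmf, hfac]
    have hm : p ^ (e / 2) ≤ Nat.sqrt n := by
      rw [Nat.le_sqrt]
      calc p ^ (e / 2) * p ^ (e / 2) = p ^ (e / 2 + e / 2) := (pow_add p _ _).symm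
        _ ≤ p ^ e := Nat.pow_le_pow_right hp.pos (by omega)
        _ = k := hke.symm
        _ ≤ n := hkn
    have h2 : 2 ≤ p ^ (e / 2) := le_trans hp.two_le (Nat.le_self_pow (by omega) p)
    have := Nat.mod_lt e (show 0 < 2 by norm_num)
    omega
  · intro k1 h1 k2 h2 heq
    simp only [Finset.mem_coe, Finset.mem_filter, Finset.mem_Icc] at h1 h2
    obtain ⟨p1, e1, hp1, he1, hke1, hmf1, hfac1⟩ := exists_pe h1.2.2 h1.2.1
    obtain ⟨p2, e2, hp2, he2, hke2, hmf2, hfac2⟩ := exists_pe h2.2.2 h2.2.1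
    simp only [hmf1, hmf2, hfac1, hfac2] at heq
    have hb1 := Nat.mod_lt e1 (show 0 < 2 by norm_num)
    have hb2 := Nat.mod_lt e2 (show 0 < 2 by norm_num)
    have hmod : e1 % 2 = e2 % 2 := by omega
    have hmeq : p1 ^ (e1 / 2) = p2 ^ (e2 / 2) := by omega
    have hpeq : p1 = p2 := by
      have m1 : (p1 ^ (e1 / 2)).minFac = p1 := hp1.pow_minFac (by omega)
      have m2 : (p2 ^ (e2 / 2)).minFac = p2 := hp2.pow_minFac (by omega)
      rw [← m1, ← m2, hmeq]
    subst hpeq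
    have hdiv : e1 / 2 = e2 / 2 := Nat.pow_right_injective hp1.two_le hmeq
    have heeq : e1 = e2 := by omega
    rw [hke1, hke2, heeq]

lemma nonprime_le (n : ℕ) :
    ∑ k ∈ (Finset.Icc 1 n).filter (fun k => ¬ k.Prime), Lam k ≤ 4 * n := by
  classical
  rcases Nat.eq_zero_or_pos n with rfl | hn
  · simp
  have hsub : ∑ k ∈ (Finset.Icc 1 n).filter (fun k => ¬ k.Prime), Lam k
      = ∑ k ∈ (Finset.Icc 1 n).filter (fun k => ¬ k.Prime ∧ Lam k ≠ 0), Lam k := by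
    refine (Finset.sum_subset ?_ ?_).symm
    · intro k hk
      simp only [Finset.mem_filter] at hk ⊢
      exact ⟨hk.1, hk.2.1⟩
    · intro k hk1 hk2
      by_contra h
      exact hk2 (Finset.mem_filter.mpr ⟨(Finset.mem_filter.mp hk1).1, (Finset.mem_filter.mp hk1).2, h⟩)
  rw [hsub]
  have hlogn : (0:ℝ) ≤ Real.log n := Real.log_natCast_nonneg n
  have hcard : (((Finset.Icc 1 n).filter (fun k => ¬ k.Prime ∧ Lam k ≠ 0)).card : ℝ)
      ≤ 2 * Nat.sqrt n := by exact_mod_cast card_S_le n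
  have hsum : ∑ k ∈ (Finset.Icc 1 n).filter (fun k => ¬ k.Prime ∧ Lam k ≠ 0), Lam k
      ≤ (((Finset.Icc 1 n).filter (fun k => ¬ k.Prime ∧ Lam k ≠ 0)).card : ℝ) * Real.log n := by
    rw [← nsmul_eq_mul]
    apply Finset.sum_le_card_nsmul
    intro k hk
    simp only [Finset.mem_filter, Finset.mem_Icc] at hk
    exact (Lam_le_log k).trans (Real.log_le_log (by exact_mod_cast hk.1.1) (by exact_mod_cast hk.1.2))
  have hsqrt : (Nat.sqrt n : ℝ) ≤ Real.sqrt n := by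
    have h1 : ((Nat.sqrt n : ℝ)) = Real.sqrt ((Nat.sqrt n : ℝ)^2) := (Real.sqrt_sq (by positivity)).symm
    rw [h1]
    apply Real.sqrt_le_sqrt
    have h2 : (Nat.sqrt n)^2 ≤ n := Nat.sqrt_le' n
    exact_mod_cast h2
  have hlog2 : Real.log n ≤ 2 * Real.sqrt n := by
    have h0 : (0:ℝ) < Real.sqrt n := Real.sqrt_pos.mpr (by exact_mod_cast hn)
    have := Real.log_le_sub_one_of_pos h0
    have hls : Real.log (Real.sqrt n) = Real.log n / 2 :=
      Real.log_sqrt (by positivity)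
    nlinarith
  have hsq : Real.sqrt n * Real.sqrt n = n := Real.mul_self_sqrt (by positivity)
  calc ∑ k ∈ (Finset.Icc 1 n).filter (fun k => ¬ k.Prime ∧ Lam k ≠ 0), Lam k
      ≤ (2 * Nat.sqrt n : ℝ) * Real.log n := by
        apply hsum.trans
        apply mul_le_mul_of_nonneg_right _ hlogn
        exact_mod_cast hcard
    _ ≤ (2 * Real.sqrt n) * (2 * Real.sqrt n) := by
        apply mul_le_mul _ hlog2 hlogn (by positivity)
        · linarith
    _ = 4 * n := by nlinarith

/-- Chebyshev-type bound: ψ(n) ≤ 6n. -/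
lemma psiN_le (n : ℕ) : psiN n ≤ 6 * n := by
  classical
  have hlog4 : Real.log 4 ≤ 2 := by
    rw [show (4:ℝ) = 2^2 by norm_num, Real.log_pow]
    have := Real.log_two_lt_d9
    push_cast
    nlinarith
  have hsplit := Finset.sum_filter_add_sum_filter_not (Finset.Icc 1 n) (fun k => k.Prime) Lam
  have h1 := theta_le n
  have h2 := nonprime_le n
  have hn0 : (0:ℝ) ≤ n := by positivity
  calc psiN n = _ := hsplit.symm
    _ ≤ n * Real.log 4 + 4 * n := add_le_add h1 h2
    _ ≤ n * 2 + 4 * n := by nlinarith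
    _ = 6 * n := by ring

lemma G_swap (N : ℕ) : G N = ∑ m ∈ Finset.range N, Lam m * psiN (N - m) := by
  classical
  have h1 : G N = ∑ x ∈ (Finset.Icc 1 N).sigma (fun n => Finset.range n),
      Lam x.2 * Lam (x.1 - x.2) := by
    rw [G, Finset.sum_sigma]
    rfl
  have h2 : ∑ m ∈ Finset.range N, Lam m * psiN (N - m)
      = ∑ x ∈ (Finset.range N).sigma (fun m => Finset.Icc 1 (N - m)),
        Lam x.1 * Lam x.2 := by
    rw [Finset.sum_sigma]
    apply Finset.sum_congr rfl
    intro m _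
    rw [psiN, Finset.mul_sum]
  rw [h1, h2]
  apply Finset.sum_nbij' (i := fun x => ⟨x.2, x.1 - x.2⟩) (j := fun x => ⟨x.1 + x.2, x.1⟩)
  · rintro ⟨n, m⟩ hx
    simp only [Finset.mem_sigma, Finset.mem_Icc, Finset.mem_range] at hx ⊢
    omega
  · rintro ⟨m, j⟩ hx
    simp only [Finset.mem_sigma, Finset.mem_Icc, Finset.mem_range] at hx ⊢
    omega
  · rintro ⟨n, m⟩ hx
    simp only [Finset.mem_sigma, Finset.mem_range] at hx
    simp only [Sigma.mk.inj_iff]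
    constructor
    · omega
    · exact heq_of_eq rfl
  · rintro ⟨m, j⟩ hx
    simp only [Finset.mem_sigma, Finset.mem_Icc] at hx
    simp only [Sigma.mk.inj_iff]
    refine ⟨trivial, ?_⟩
    have : m + j - m = j := by omega
    rw [this]
  · rintro ⟨n, m⟩ hx
    rfl

lemma T1_eq (N : ℕ) : ∑ m ∈ Finset.range N, Lam m * ((N:ℝ) - m)
    = ∑ n ∈ Finset.range N, psiN n := by
  induction N with
  | zero => simp
  | succ N ih =>
    calc ∑ m ∈ Finset.range (N+1), Lam m * (((N+1:ℕ):ℝ) - m)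
        = ∑ m ∈ Finset.range (N+1), (Lam m * ((N:ℝ) - m) + Lam m) := by
          apply Finset.sum_congr rfl
          intro m _
          push_cast
          ring
      _ = (∑ m ∈ Finset.range N, Lam m * ((N:ℝ) - m) + Lam N * ((N:ℝ) - N))
            + ∑ m ∈ Finset.range (N+1), Lam m := by
          rw [Finset.sum_add_distrib, Finset.sum_range_succ]
      _ = ∑ n ∈ Finset.range N, psiN n + psiN N := by
          rw [ih, sum_range_succ_Lam]; ring
      _ = ∑ n ∈ Finset.range (N+1), psiN n := (Finset.sum_range_succ _ _).symm

lemma gauss_sum (N : ℕ) : ∑ n ∈ Finset.range N, (n:ℝ) = N * (N - 1) / 2 := by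
  induction N with
  | zero => simp
  | succ N ih =>
    rw [Finset.sum_range_succ, ih]
    push_cast
    ring
/-- Proposition 1, first bound: |G(N) − N²/2| ≤ K·N·max_{0 ≤ u ≤ N} |R(u)| for N ≥ 4. -/
theorem stmt_2 : ∃ K : ℝ, ∀ N : ℕ, 4 ≤ N →
    |G N - (N : ℝ) ^ 2 / 2| ≤ K * (N : ℝ) * sSup ((fun u => |RR u|) '' Set.Icc 0 (N : ℝ)) := by
  refine ⟨8, fun N hN => ?_⟩
  set M := sSup ((fun u => |RR u|) '' Set.Icc 0 (N : ℝ)) with hMdef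
  have hN0 : (0:ℝ) < N := by exact_mod_cast Nat.lt_of_lt_of_le (by norm_num) hN
  -- psi is bounded on [0, N]
  have hpsi_bd : ∀ u ∈ Set.Icc (0:ℝ) (N:ℝ), psi u ≤ psiN N := by
    intro u hu
    rw [psi, psiN]
    apply Finset.sum_le_sum_of_subset_of_nonneg
    · apply Finset.Icc_subset_Icc_right
      calc ⌊u⌋₊ ≤ ⌊(N:ℝ)⌋₊ := Nat.floor_le_floor hu.2
        _ = N := Nat.floor_natCast N
    · intro _ _ _; exact Lam_nonneg _
  have hpsi_nonneg : ∀ u : ℝ, 0 ≤ psi u :=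
    fun u => Finset.sum_nonneg fun _ _ => Lam_nonneg _
  have hbdd : BddAbove ((fun u => |RR u|) '' Set.Icc 0 (N : ℝ)) := by
    refine ⟨psiN N + N, ?_⟩
    rintro y ⟨u, hu, rfl⟩
    calc |RR u| ≤ |psi u| + |u| := abs_sub _ _
      _ ≤ psiN N + N := by
          rw [abs_of_nonneg (hpsi_nonneg u), abs_of_nonneg hu.1]
          exact add_le_add (hpsi_bd u hu) hu.2
  have hRleM : ∀ u ∈ Set.Icc (0:ℝ) (N:ℝ), |RR u| ≤ M :=
    fun u hu => le_csSup hbdd ⟨u, hu, rfl⟩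
  -- M ≥ 3/2
  have hfloor32 : ⌊(3/2 : ℝ)⌋₊ = 1 := by
    rw [Nat.floor_eq_iff (by norm_num)]
    norm_num
  have hRR32 : |RR (3/2 : ℝ)| = 3/2 := by
    rw [RR, psi, hfloor32]
    rw [Finset.Icc_self, Finset.sum_singleton, Lam_one]
    norm_num
  have hM32 : (3/2 : ℝ) ≤ M := by
    rw [← hRR32]
    apply le_csSup hbdd
    refine ⟨3/2, ⟨by norm_num, ?_⟩, rfl⟩
    have : (4:ℝ) ≤ N := by exact_mod_cast hN
    linarith
  have hM0 : (0:ℝ) ≤ M := by linarith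
  -- main decomposition
  have hpsiRR : ∀ k : ℕ, psiN k = (k:ℝ) + RR (k:ℝ) := by
    intro k
    rw [RR, psi_natCast]
    ring
  have hGd : G N = (∑ m ∈ Finset.range N, Lam m * ((N:ℝ) - m))
      + ∑ m ∈ Finset.range N, Lam m * RR ((N - m : ℕ) : ℝ) := by
    rw [G_swap, ← Finset.sum_add_distrib]
    apply Finset.sum_congr rfl
    intro m hm
    have hmN : m ≤ N := (Finset.mem_range.mp hm).le
    rw [hpsiRR (N - m), Nat.cast_sub hmN]
    ring
  have hT1 : ∑ m ∈ Finset.range N, Lam m * ((N:ℝ) - m)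
      = (N:ℝ) * (N - 1) / 2 + ∑ n ∈ Finset.range N, RR (n:ℝ) := by
    rw [T1_eq]
    rw [show ∑ n ∈ Finset.range N, psiN n
        = ∑ n ∈ Finset.range N, ((n:ℝ) + RR (n:ℝ)) from
      Finset.sum_congr rfl (fun n _ => hpsiRR n)]
    rw [Finset.sum_add_distrib, gauss_sum]
  have hkey : G N - (N:ℝ)^2 / 2
      = -(N:ℝ)/2 + (∑ n ∈ Finset.range N, RR (n:ℝ))
        + ∑ m ∈ Finset.range N, Lam m * RR ((N - m : ℕ) : ℝ) := by
    rw [hGd, hT1]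
    ring
  -- bounds on the two sums
  have hA : |∑ n ∈ Finset.range N, RR (n:ℝ)| ≤ N * M := by
    calc |∑ n ∈ Finset.range N, RR (n:ℝ)| ≤ ∑ n ∈ Finset.range N, |RR (n:ℝ)| :=
          Finset.abs_sum_le_sum_abs _ _
      _ ≤ ∑ n ∈ Finset.range N, M := by
          apply Finset.sum_le_sum
          intro n hn
          apply hRleM
          constructor
          · positivity
          · exact_mod_cast (Finset.mem_range.mp hn).le
      _ = N * M := by rw [Finset.sum_const, Finset.card_range, nsmul_eq_mul]
  have hLamSum : ∑ m ∈ Finset.range N, Lam m ≤ psiN N := by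
    calc ∑ m ∈ Finset.range N, Lam m ≤ ∑ m ∈ Finset.range (N+1), Lam m := by
          apply Finset.sum_le_sum_of_subset_of_nonneg
          · exact Finset.range_subset_range.mpr (Nat.le_succ N)
          · intro _ _ _; exact Lam_nonneg _
      _ = psiN N := sum_range_succ_Lam N
  have hB : |∑ m ∈ Finset.range N, Lam m * RR ((N - m : ℕ) : ℝ)| ≤ 6 * N * M := by
    calc |∑ m ∈ Finset.range N, Lam m * RR ((N - m : ℕ) : ℝ)|
        ≤ ∑ m ∈ Finset.range N, |Lam m * RR ((N - m : ℕ) : ℝ)| :=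
          Finset.abs_sum_le_sum_abs _ _
      _ ≤ ∑ m ∈ Finset.range N, Lam m * M := by
          apply Finset.sum_le_sum
          intro m hm
          rw [abs_mul, abs_of_nonneg (Lam_nonneg m)]
          apply mul_le_mul_of_nonneg_left _ (Lam_nonneg m)
          apply hRleM
          constructor
          · positivity
          · have : (N - m : ℕ) ≤ N := Nat.sub_le N m
            exact_mod_cast this
      _ = (∑ m ∈ Finset.range N, Lam m) * M := by rw [← Finset.sum_mul]
      _ ≤ psiN N * M := mul_le_mul_of_nonneg_right hLamSum hM0
      _ ≤ (6 * N) * M := mul_le_mul_of_nonneg_right (psiN_le N) hM0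
      _ = 6 * N * M := by ring
  have hhalf : (N:ℝ)/2 ≤ N * M := by
    have : (1/2 : ℝ) ≤ M := by linarith
    calc (N:ℝ)/2 = N * (1/2) := by ring
      _ ≤ N * M := mul_le_mul_of_nonneg_left this hN0.le
  calc |G N - (N:ℝ)^2 / 2|
      = |-(N:ℝ)/2 + (∑ n ∈ Finset.range N, RR (n:ℝ))
          + ∑ m ∈ Finset.range N, Lam m * RR ((N - m : ℕ) : ℝ)| := by rw [hkey]
    _ ≤ |(-(N:ℝ)/2 + ∑ n ∈ Finset.range N, RR (n:ℝ))|
          + |∑ m ∈ Finset.range N, Lam m * RR ((N - m : ℕ) : ℝ)| := abs_add_le _ _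
    _ ≤ (|(-(N:ℝ)/2)| + |∑ n ∈ Finset.range N, RR (n:ℝ)|)
          + |∑ m ∈ Finset.range N, Lam m * RR ((N - m : ℕ) : ℝ)| := by
        exact add_le_add (abs_add_le _ _) le_rfl
    _ ≤ ((N:ℝ)/2 + N * M) + 6 * N * M := by
        apply add_le_add (add_le_add _ hA) hB
        rw [show (-(N:ℝ)/2) = -((N:ℝ)/2) by ring, abs_neg, abs_of_nonneg (by positivity)]
    _ ≤ (N * M + N * M) + 6 * N * M := by linarith
    _ = 8 * N * M := by ring
end
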